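/- (Abstract form of: the only compact Toeplitz operator is zero.) Let H be a complex Hilbert space, let S be a bounded linear isometry on H (‖S h‖ = ‖h‖ for all h ∈ H) whose powers tend to zero in the weak operator topology, i.e., ⟨S^r h, g⟩ → 0 as r → ∞ for all h, g ∈ H. If A is a compact operator on H satisfying S* A S = A, then A = 0. (In the paper, H = H²₋(𝔯_II), S = 𝒯_{φ₃}, and A = 𝒯_u a compact Toeplitz operator; the hypothesis S* A S = A is the third Brown–Halmos relation, and the weak convergence of S^r to 0 follows from the orthonormal basis constructed in Lemma 4.1.) -/

import Mathlib

open ContinuousLinearMap Filter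

theorem compact_brownHalmos_eq_zero
    {H : Type*} [NormedAddCommGroup H] [InnerProductSpace ℂ H] [CompleteSpace H]
    (S : H →L[ℂ] H)
    -- `S` is an isometry
    (hiso : ∀ h : H, ‖S h‖ = ‖h‖)
    -- the powers of `S` tend to zero in the weak operator topology
    (hweak : ∀ h g : H, Tendsto (fun r : ℕ => (inner ℂ ((S ^ r) h) g : ℂ)) atTop (nhds 0))
    -- `A` is a compact operator satisfying `S* A S = A`
    (A : H →L[ℂ] H) (hA : IsCompactOperator A)
    (hSAS : adjoint S * A * S = A) :
    A = 0 := by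
  -- norms of powers are preserved
  have hpow : ∀ (r : ℕ) (h : H), ‖(S ^ r) h‖ = ‖h‖ := by
    intro r
    induction r with
    | zero => intro h; simp
    | succ n ih =>
      intro h
      rw [pow_succ, ContinuousLinearMap.mul_apply, ih, hiso]
  -- the invariance identity
  have hinv : ∀ (r : ℕ) (h k : H),
      (inner ℂ (A ((S ^ r) h)) ((S ^ r) k) : ℂ) = inner ℂ (A h) k := by
    intro r
    induction r with
    | zero => intro h k; simp
    | succ n ih =>
      intro h k
      rw [pow_succ', ContinuousLinearMap.mul_apply, ContinuousLinearMap.mul_apply]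
      have : (inner ℂ (A (S ((S ^ n) h))) (S ((S ^ n) k)) : ℂ)
          = inner ℂ ((adjoint S) (A (S ((S ^ n) h)))) ((S ^ n) k) := by
        rw [adjoint_inner_left]
      rw [this]
      have : (adjoint S) (A (S ((S ^ n) h))) = ((adjoint S * A * S) ((S ^ n) h)) := rfl
      rw [this, hSAS, ih]
  -- A (S^r h) tends to 0 in norm (complete continuity on this sequence)
  have hnorm : ∀ h : H, Tendsto (fun r : ℕ => A ((S ^ r) h)) atTop (nhds 0) := by
    intro h
    apply tendsto_of_subseq_tendsto
    intro ns hns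
    -- compactness: the images lie in a compact set
    have hK : IsCompact (closure (⇑A '' Metric.closedBall 0 (‖h‖ + 1))) := by
      have := hA.isCompact_closure_image_closedBall (𝕜₁ := ℂ) (f := (A : H →ₗ[ℂ] H))
      exact this (‖h‖ + 1)
    have hmem : ∀ n : ℕ, A ((S ^ ns n) h) ∈ closure (⇑A '' Metric.closedBall 0 (‖h‖ + 1)) := by
      intro n
      apply subset_closure
      exact ⟨(S ^ ns n) h, by
        simp only [Metric.mem_closedBall, dist_zero_right, hpow]
        linarith, rfl⟩
    obtain ⟨y, -, φ, hφ, hy⟩ := hK.tendsto_subseq hmem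
    -- identify the limit as 0 using weak convergence
    have hy0 : y = 0 := by
      have hweak' : ∀ g : H, Tendsto (fun r : ℕ => (inner ℂ (A ((S ^ r) h)) g : ℂ))
          atTop (nhds 0) := by
        intro g
        have := hweak h ((adjoint A) g)
        simpa only [adjoint_inner_right] using this
      have h1 : Tendsto (fun n : ℕ => (inner ℂ (A ((S ^ ns (φ n)) h)) y : ℂ)) atTop (nhds 0) :=
        (hweak' y).comp (hns.comp hφ.tendsto_atTop)
      have h2 : Tendsto (fun n : ℕ => (inner ℂ (A ((S ^ ns (φ n)) h)) y : ℂ)) atTop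
          (nhds (inner ℂ y y)) :=
        hy.inner tendsto_const_nhds
      have : (inner ℂ y y : ℂ) = 0 := tendsto_nhds_unique h2 h1
      exact inner_self_eq_zero.mp this
    exact ⟨φ, hy0 ▸ hy⟩
  -- conclude
  ext h
  simp only [zero_apply]
  rw [← inner_self_eq_zero (𝕜 := ℂ)]
  have hconst : ∀ r : ℕ, (inner ℂ (A ((S ^ r) h)) ((S ^ r) (A h)) : ℂ) = inner ℂ (A h) (A h) :=
    fun r => hinv r h (A h)
  have hzero : Tendsto (fun r : ℕ => (inner ℂ (A ((S ^ r) h)) ((S ^ r) (A h)) : ℂ))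
      atTop (nhds 0) := by
    rw [tendsto_zero_iff_norm_tendsto_zero]
    apply squeeze_zero (fun r => norm_nonneg _)
      (fun r => (norm_inner_le_norm _ _).trans (le_of_eq (by rw [hpow])))
    have : Tendsto (fun r : ℕ => ‖A ((S ^ r) h)‖ * ‖A h‖) atTop (nhds (‖(0 : H)‖ * ‖A h‖)) :=
      (((hnorm h).norm).mul_const _)
    simpa using this
  have : Tendsto (fun _ : ℕ => (inner ℂ (A h) (A h) : ℂ)) atTop (nhds 0) := by
    simpa only [hconst] using hzero
  exact tendsto_nhds_unique tendsto_const_nhds this
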